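/- arXiv:2107.08888 — 3 statements merged into one kernel-verified Lean document; each statement's English description precedes it below -/
import Mathlib

section
/- Let S be a nonempty finite set with cardinality |S|, let P be a probability mass function on S, and let X_1,...,X_T (T ≥ 1) be i.i.d. S-valued random variables with law P. For every δ ∈ (0, e^{-1}], with probability at least 1 − δ the empirical distribution satisfies ‖P̂ − P‖₁ ≤ (1 + √2) · √( |S| · log(1/δ) / T ). -/
open MeasureTheory ProbabilityTheory Finset

open Real

lemma bern_mgf_bound {p t : ℝ} (hp0 : 0 ≤ p) (hp1 : p ≤ 1) (ht : 0 ≤ t) :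
    1 + p * (Real.exp t - 1) ≤ Real.exp (p * t + t ^ 2 / 8) := by
  set h : ℝ → ℝ := fun x => 1 - p + p * Real.exp x with hh
  have hpos : ∀ x, 0 < h x := by
    intro x
    have := Real.exp_pos x
    rcases lt_or_eq_of_le hp1 with h1 | h1
    · simp only [hh]; nlinarith
    · simp only [hh, ← h1]; nlinarith
  set g1 : ℝ → ℝ := fun x => p + x / 4 - p * Real.exp x / h x with hg1
  set g : ℝ → ℝ := fun x => p * x + x ^ 2 / 8 - Real.log (h x) with hg
  have hdh : ∀ x, HasDerivAt h (p * Real.exp x) x := by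
    intro x
    exact (((Real.hasDerivAt_exp x).const_mul p).const_add (1 - p))
  have hdg : ∀ x, HasDerivAt g (g1 x) x := by
    intro x
    have h1 : HasDerivAt (fun x : ℝ => p * x) p x := by
      simpa using (hasDerivAt_id x).const_mul p
    have h2 : HasDerivAt (fun x : ℝ => x ^ 2 / 8) (x / 4) x := by
      have := (hasDerivAt_pow 2 x).div_const 8
      exact this.congr_deriv (by rw [show (2:ℕ) - 1 = 1 from rfl]; push_cast; ring)
    have h3 : HasDerivAt (fun x => Real.log (h x)) (p * Real.exp x / h x) x :=
      (hdh x).log (hpos x).ne'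
    exact (h1.add h2).sub h3
  have hdg1 : ∀ x, HasDerivAt g1
      (1 / 4 - (p * Real.exp x * h x - p * Real.exp x * (p * Real.exp x)) / (h x) ^ 2) x := by
    intro x
    have h2 : HasDerivAt (fun x : ℝ => p + x / 4) (1 / 4) x := by
      simpa using ((hasDerivAt_id x).div_const 4).const_add p
    have h3 : HasDerivAt (fun x => p * Real.exp x / h x)
        ((p * Real.exp x * h x - p * Real.exp x * (p * Real.exp x)) / (h x) ^ 2) x := by
      have := ((Real.hasDerivAt_exp x).const_mul p).div (hdh x) (hpos x).ne'
      exact this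
    exact h2.sub h3
  have hg1mono : Monotone g1 := by
    apply monotone_of_hasDerivAt_nonneg hdg1
    intro x
    have hx := hpos x
    have he := Real.exp_pos x
    have key : 4 * (p * Real.exp x * h x - p * Real.exp x * (p * Real.exp x)) ≤ (h x) ^ 2 := by
      simp only [hh]
      nlinarith [sq_nonneg (1 - p - p * Real.exp x), mul_nonneg hp0 he.le]
    have h2 : (0:ℝ) < (h x) ^ 2 := by positivity
    have : (p * Real.exp x * h x - p * Real.exp x * (p * Real.exp x)) / (h x) ^ 2 ≤ 1 / 4 := by
      rw [div_le_div_iff₀ h2 (by norm_num)]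
      linarith
    simp only [Pi.zero_apply]
    linarith
  have hg10 : g1 0 = 0 := by
    simp [hg1, hh]
  have hg1nonneg : ∀ x, 0 ≤ x → 0 ≤ g1 x := by
    intro x hx
    calc (0:ℝ) = g1 0 := hg10.symm
    _ ≤ g1 x := hg1mono hx
  have hgmono : MonotoneOn g (Set.Ici 0) := by
    apply monotoneOn_of_deriv_nonneg (convex_Ici 0)
    · exact (fun x _ => (hdg x).differentiableAt.continuousAt.continuousWithinAt)
    · exact fun x _ => (hdg x).differentiableAt.differentiableWithinAt
    · intro x hx
      rw [(hdg x).deriv]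
      exact hg1nonneg x (le_of_lt (by simpa using hx))
  have hg0 : g 0 = 0 := by simp [hg, hh]
  have hgt : 0 ≤ g t := by
    calc (0:ℝ) = g 0 := hg0.symm
    _ ≤ g t := hgmono (Set.self_mem_Ici) (by exact ht) ht
  have : Real.log (h t) ≤ p * t + t ^ 2 / 8 := by simp only [hg] at hgt; linarith
  have := (Real.log_le_iff_le_exp (hpos t)).mp this
  simp only [hh] at this
  linarith



lemma indicator_chernoff {Ω : Type*} [MeasurableSpace Ω] (μ : Measure Ω) [IsProbabilityMeasure μ]
    {S : Type*} [Fintype S] [DecidableEq S] [MeasurableSpace S] [MeasurableSingletonClass S]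
    (P : S → ℝ) (hP0 : ∀ s, 0 ≤ P s) (hP1 : ∑ s, P s = 1)
    (T : ℕ) (X : Fin T → Ω → S) (hmeas : ∀ t, Measurable (X t))
    (hindep : iIndepFun X μ)
    (hlaw : ∀ t s, μ (X t ⁻¹' {s}) = ENNReal.ofReal (P s))
    (A : Finset S) (c : ℝ) (hc : 0 ≤ c) :
    μ {ω | (T : ℝ) * (∑ s ∈ A, P s) + T * c ≤ ∑ t, (if X t ω ∈ A then (1:ℝ) else 0)} ≤
      ENNReal.ofReal (Real.exp (-2 * T * c ^ 2)) := by
  classical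
  set pA := ∑ s ∈ A, P s with hpA
  have hpA0 : 0 ≤ pA := Finset.sum_nonneg fun s _ => hP0 s
  have hpA1 : pA ≤ 1 := by
    rw [← hP1]
    exact Finset.sum_le_sum_of_subset_of_nonneg (Finset.subset_univ A) fun s _ _ => hP0 s
  set f : S → ℝ := fun s => if s ∈ A then 1 else 0 with hf
  set Y : Fin T → Ω → ℝ := fun t => f ∘ X t with hY
  have hYmeas : ∀ t, Measurable (Y t) := fun t => (measurable_of_countable f).comp (hmeas t)
  have hYindep : iIndepFun Y μ :=
    hindep.comp (fun _ => f) (fun _ => measurable_of_countable f)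
  set t0 : ℝ := 4 * c with ht0def
  have ht0 : 0 ≤ t0 := by positivity
  -- pointwise identity
  have hpt : ∀ t ω, Real.exp (t0 * Y t ω) = 1 + (Real.exp t0 - 1) * Y t ω := by
    intro t ω
    simp only [hY, hf, Function.comp_apply]
    split_ifs <;> simp
  -- measure of preimage of A
  have hmuA : ∀ t, μ (X t ⁻¹' ↑A) = ENNReal.ofReal pA := by
    intro t
    have hun : (X t ⁻¹' ↑A) = ⋃ s ∈ A, X t ⁻¹' {s} := by ext ω; simp
    rw [hun, measure_biUnion_finset]
    · rw [Finset.sum_congr rfl fun s _ => hlaw t s,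
        ← ENNReal.ofReal_sum_of_nonneg fun s _ => hP0 s]
    · intro s _ s' _ hss
      rw [Function.onFun, Set.disjoint_left]
      intro ω h1 h2
      simp only [Set.mem_preimage, Set.mem_singleton_iff] at h1 h2
      exact hss (h1.symm.trans h2)
    · exact fun s _ => hmeas t (measurableSet_singleton s)
  -- Y as indicator
  have hYind : ∀ t, Y t = Set.indicator (X t ⁻¹' ↑A) (fun _ => (1:ℝ)) := by
    intro t; ext ω
    simp only [hY, hf, Function.comp_apply, Set.indicator_apply, Set.mem_preimage,
      Finset.mem_coe]
  have hYint : ∀ t, Integrable (Y t) μ := by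
    intro t
    rw [hYind t]
    exact (integrable_const (1:ℝ)).indicator (hmeas t (A.measurableSet))
  have hYexp : ∀ t, ∫ ω, Y t ω ∂μ = pA := by
    intro t
    rw [hYind t, MeasureTheory.integral_indicator_const _ (hmeas t (A.measurableSet)),
      measureReal_def, hmuA t, ENNReal.toReal_ofReal hpA0]
    simp
  -- mgf of single Y
  have hmgf : ∀ t, mgf (Y t) μ t0 = 1 + pA * (Real.exp t0 - 1) := by
    intro t
    unfold mgf
    rw [show (fun ω => Real.exp (t0 * Y t ω)) = fun ω => 1 + (Real.exp t0 - 1) * Y t ω from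
      funext fun ω => hpt t ω]
    rw [integral_add (integrable_const 1) ((hYint t).const_mul _), integral_const,
      integral_const_mul, hYexp t]
    simp [mul_comm]
  have hintexp : ∀ t, Integrable (fun ω => Real.exp (t0 * Y t ω)) μ := by
    intro t
    rw [show (fun ω => Real.exp (t0 * Y t ω)) = fun ω => 1 + (Real.exp t0 - 1) * Y t ω from
      funext fun ω => hpt t ω]
    exact (integrable_const 1).add ((hYint t).const_mul _)
  -- Chernoff
  have hint : Integrable (fun ω => Real.exp (t0 * (∑ t, Y t) ω)) μ :=
    hYindep.integrable_exp_mul_sum hYmeas fun t _ => hintexp t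
  have hcher := measure_ge_le_exp_mul_mgf (X := ∑ t, Y t) (μ := μ) (t := t0)
    ((T : ℝ) * pA + T * c) ht0 hint
  rw [hYindep.mgf_sum hYmeas] at hcher
  have hprod : ∏ t : Fin T, mgf (Y t) μ t0 ≤ Real.exp ((T : ℝ) * (pA * t0 + t0 ^ 2 / 8)) := by
    calc ∏ t : Fin T, mgf (Y t) μ t0 = (1 + pA * (Real.exp t0 - 1)) ^ T := by
          rw [Finset.prod_congr rfl fun t _ => hmgf t]; simp
      _ ≤ (Real.exp (pA * t0 + t0 ^ 2 / 8)) ^ T := by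
          apply pow_le_pow_left₀ (by nlinarith [Real.one_le_exp ht0]) (bern_mgf_bound hpA0 hpA1 ht0)
      _ = Real.exp ((T : ℝ) * (pA * t0 + t0 ^ 2 / 8)) := (Real.exp_nat_mul _ T).symm
  have hfinal : (μ {ω | (T : ℝ) * pA + T * c ≤ (∑ t, Y t) ω}).toReal ≤
      Real.exp (-2 * T * c ^ 2) := by
    calc (μ {ω | (T : ℝ) * pA + T * c ≤ (∑ t, Y t) ω}).toReal
        ≤ Real.exp (-t0 * ((T : ℝ) * pA + T * c)) * ∏ t : Fin T, mgf (Y t) μ t0 := hcher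
      _ ≤ Real.exp (-t0 * ((T : ℝ) * pA + T * c)) * Real.exp ((T : ℝ) * (pA * t0 + t0 ^ 2 / 8)) := by
          exact mul_le_mul_of_nonneg_left hprod (Real.exp_pos _).le
      _ = Real.exp (-2 * T * c ^ 2) := by
          rw [← Real.exp_add]; congr 1; simp only [ht0def]; ring
  have hset : {ω | (T : ℝ) * pA + T * c ≤ ∑ t, (if X t ω ∈ A then (1:ℝ) else 0)} =
      {ω | (T : ℝ) * pA + T * c ≤ (∑ t, Y t) ω} := by
    ext ω; simp [hY, hf, Finset.sum_apply]
  rw [hset]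
  rw [← ENNReal.ofReal_toReal (measure_ne_top μ _)]
  exact ENNReal.ofReal_le_ofReal hfinal

/-- **Empirical distribution concentration.** Let `S` be a nonempty finite set, `P` a
probability mass function on `S`, and `X 0, …, X (T-1)` i.i.d. `S`-valued random variables
with law `P` (`T ≥ 1`). For every `δ ∈ (0, e⁻¹]`, with probability at least `1 - δ`,
`‖P̂ - P‖₁ ≤ (1 + √2) · √(|S| · log(1/δ) / T)`, where `P̂` is the empirical distribution. -/
theorem empirical_distribution_l1_concentration
    {S : Type*} [Fintype S] [Nonempty S] [DecidableEq S] [MeasurableSpace S] [MeasurableSingletonClass S]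
    (P : S → ℝ) (hP0 : ∀ s, 0 ≤ P s) (hP1 : ∑ s, P s = 1)
    {Ω : Type*} [MeasurableSpace Ω] (μ : Measure Ω) [IsProbabilityMeasure μ]
    (T : ℕ) (hT : 1 ≤ T)
    (X : Fin T → Ω → S) (hmeas : ∀ t, Measurable (X t))
    (hindep : iIndepFun X μ)
    (hlaw : ∀ t s, μ (X t ⁻¹' {s}) = ENNReal.ofReal (P s))
    (δ : ℝ) (hδ0 : 0 < δ) (hδ1 : δ ≤ Real.exp (-1)) :
    ENNReal.ofReal (1 - δ) ≤
      μ {ω | ∑ s, |((Finset.univ.filter fun t => X t ω = s).card : ℝ) / T - P s| ≤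
        (1 + Real.sqrt 2) *
          Real.sqrt ((Fintype.card S : ℝ) * Real.log (1 / δ) / T)} := by
  classical
  set K : ℝ := (Fintype.card S : ℝ) with hKdef
  set L : ℝ := Real.log (1 / δ) with hLdef
  have hK1 : 1 ≤ K := by
    simp only [hKdef, Nat.one_le_cast]
    exact Fintype.card_pos
  have hL1 : 1 ≤ L := by
    rw [hLdef, one_div, Real.log_inv, le_neg]
    calc Real.log δ ≤ Real.log (Real.exp (-1)) := Real.log_le_log hδ0 hδ1
      _ = -1 := Real.log_exp _
  have hTpos : (0:ℝ) < T := by exact_mod_cast hT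
  set ε : ℝ := (1 + Real.sqrt 2) * Real.sqrt (K * L / T) with hεdef
  have hsqrt2 : (1.4:ℝ) ≤ Real.sqrt 2 := by
    rw [show (1.4:ℝ) = Real.sqrt (1.4^2) from (Real.sqrt_sq (by norm_num)).symm]
    exact Real.sqrt_le_sqrt (by norm_num)
  have hε0 : 0 ≤ ε := by positivity
  have hε2 : ε ^ 2 = (3 + 2 * Real.sqrt 2) * (K * L / T) := by
    rw [hεdef, mul_pow, Real.sq_sqrt (by positivity)]
    have h2 : Real.sqrt 2 ^ 2 = 2 := Real.sq_sqrt (by norm_num)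
    linear_combination (K * L / (T:ℝ)) * h2
  -- the key numeric inequality
  have hkey : (2:ℝ) ^ (Fintype.card S) * Real.exp (-2 * T * (ε/2) ^ 2) ≤ δ := by
    have hexp : -2 * (T:ℝ) * (ε/2) ^ 2 = -((3 + 2 * Real.sqrt 2) * (K * L) / 2) := by
      field_simp [hε2]
      linear_combination (-(T:ℝ)) * hε2 - (3 + 2 * Real.sqrt 2) * (mul_div_cancel₀ (K * L) hTpos.ne')
    rw [hexp]
    have hlog2 : Real.log 2 < 0.6931471808 := Real.log_two_lt_d9
    have hKL_K : K ≤ K * L := le_mul_of_one_le_right (by linarith) hL1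
    have hKL_L : L ≤ K * L := le_mul_of_one_le_left (by linarith) hK1
    have harg : K * Real.log 2 - (3 + 2 * Real.sqrt 2) * (K * L) / 2 ≤ Real.log δ := by
      have hlogδ : -L = Real.log δ := by rw [hLdef, one_div, Real.log_inv, neg_neg]
      rw [← hlogδ]
      nlinarith [mul_le_mul_of_nonneg_left hlog2.le (by linarith : (0:ℝ) ≤ K),
        mul_le_mul_of_nonneg_left hsqrt2 (by positivity : (0:ℝ) ≤ K * L)]
    have h2K : (2:ℝ) ^ (Fintype.card S) = Real.exp (K * Real.log 2) := by
      rw [hKdef, Real.exp_nat_mul, Real.exp_log (by norm_num : (0:ℝ) < 2)]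
    calc (2:ℝ) ^ (Fintype.card S) * Real.exp (-((3 + 2 * Real.sqrt 2) * (K * L) / 2))
        = Real.exp (K * Real.log 2 - (3 + 2 * Real.sqrt 2) * (K * L) / 2) := by
          rw [h2K, ← Real.exp_add]
          congr 1
          try ring
      _ ≤ Real.exp (Real.log δ) := Real.exp_le_exp.mpr harg
      _ = δ := Real.exp_log hδ0
  -- measurability of the counting functions
  have hcm : ∀ s : S, Measurable (fun ω =>
      ((Finset.univ.filter fun t => X t ω = s).card : ℝ)) := by
    intro s
    have : (fun ω => ((Finset.univ.filter fun t => X t ω = s).card : ℝ)) =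
        fun ω => ∑ t, (if X t ω = s then (1:ℝ) else 0) := by
      ext ω
      rw [Finset.card_filter]
      push_cast
      rfl
    rw [this]
    exact Finset.measurable_sum _ fun t _ =>
      Measurable.ite (hmeas t (measurableSet_singleton s)) measurable_const measurable_const
  have hgmeas : Measurable (fun ω => ∑ s,
      |((Finset.univ.filter fun t => X t ω = s).card : ℝ) / T - P s|) :=
    Finset.measurable_sum _ fun s _ => (((hcm s).div_const _).sub measurable_const).abs
  set E : Set Ω := {ω | ∑ s, |((Finset.univ.filter fun t => X t ω = s).card : ℝ) / T - P s| ≤ ε}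
    with hEdef
  have hEmeas : MeasurableSet E := measurableSet_le hgmeas measurable_const
  -- complement inclusion
  set F : Finset S → Set Ω := fun A =>
    {ω | (T : ℝ) * (∑ s ∈ A, P s) + T * (ε/2) ≤ ∑ t, (if X t ω ∈ A then (1:ℝ) else 0)} with hFdef
  have hsub : Eᶜ ⊆ ⋃ A ∈ (Finset.univ : Finset (Finset S)), F A := by
    intro ω hω
    simp only [hEdef, Set.mem_compl_iff, Set.mem_setOf_eq, not_le] at hω
    set d : S → ℝ := fun s => ((Finset.univ.filter fun t => X t ω = s).card : ℝ) / T - P s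
      with hddef
    set A : Finset S := Finset.univ.filter (fun s => 0 ≤ d s) with hAdef
    have hcount : ∑ s, ((Finset.univ.filter fun t => X t ω = s).card : ℝ) = T := by
      have := Finset.card_eq_sum_card_fiberwise
        (f := fun t : Fin T => X t ω) (s := Finset.univ) (t := Finset.univ)
        (fun t _ => Finset.mem_univ _)
      have h2 : ∑ s, ((Finset.univ.filter fun t => X t ω = s).card : ℝ) =
          ((Finset.univ : Finset (Fin T)).card : ℝ) := by
        rw [this]; push_cast; rfl
      rw [h2]; simp
    have hsum0 : ∑ s, d s = 0 := by
      simp only [hddef]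
      rw [Finset.sum_sub_distrib, hP1, ← Finset.sum_div, hcount]
      field_simp
      norm_num
    have habs : ∑ s, |d s| = 2 * ∑ s ∈ A, d s := by
      have hsplit := Finset.sum_filter_add_sum_filter_not Finset.univ (fun s => 0 ≤ d s)
        (fun s => |d s|)
      have h1 : ∑ s ∈ Finset.univ.filter (fun s => 0 ≤ d s), |d s| = ∑ s ∈ A, d s :=
        Finset.sum_congr rfl fun s hs => abs_of_nonneg (Finset.mem_filter.mp hs).2
      have h2 : ∑ s ∈ Finset.univ.filter (fun s => ¬ 0 ≤ d s), |d s| =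
          - ∑ s ∈ Finset.univ.filter (fun s => ¬ 0 ≤ d s), d s := by
        rw [← Finset.sum_neg_distrib]
        exact Finset.sum_congr rfl fun s hs =>
          abs_of_neg (not_le.mp (Finset.mem_filter.mp hs).2)
      have h3 := Finset.sum_filter_add_sum_filter_not Finset.univ (fun s => 0 ≤ d s)
        (fun s => d s)
      rw [hsum0] at h3
      rw [← hsplit, h1, h2, hAdef]
      linarith
    have hA : (T : ℝ) * (∑ s ∈ A, P s) + T * (ε/2) ≤
        ∑ t, (if X t ω ∈ A then (1:ℝ) else 0) := by
      have hAd : ε / 2 < ∑ s ∈ A, d s := by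
        rw [habs] at hω; linarith
      have hswap : ∑ t, (if X t ω ∈ A then (1:ℝ) else 0) =
          ∑ s ∈ A, ((Finset.univ.filter fun t => X t ω = s).card : ℝ) := by
        have : ∀ t : Fin T, (if X t ω ∈ A then (1:ℝ) else 0) =
            ∑ s ∈ A, (if X t ω = s then (1:ℝ) else 0) := by
          intro t
          rw [Finset.sum_ite_eq A (X t ω) (fun _ => (1:ℝ))]
        rw [Finset.sum_congr rfl fun t _ => this t, Finset.sum_comm]
        refine Finset.sum_congr rfl fun s _ => ?_
        rw [Finset.card_filter]
        push_cast
        rfl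
      rw [hswap]
      have hexpand : ∑ s ∈ A, d s =
          (∑ s ∈ A, ((Finset.univ.filter fun t => X t ω = s).card : ℝ)) / T
            - ∑ s ∈ A, P s := by
        simp only [hddef]
        rw [Finset.sum_sub_distrib, Finset.sum_div]
      rw [hexpand] at hAd
      have := mul_lt_mul_of_pos_left hAd hTpos
      rw [mul_sub, mul_div_cancel₀ _ hTpos.ne'] at this
      linarith
    exact Set.mem_biUnion (Finset.mem_univ A) hA
  -- union bound
  have hcompl : μ Eᶜ ≤ ENNReal.ofReal δ := by
    calc μ Eᶜ ≤ μ (⋃ A ∈ (Finset.univ : Finset (Finset S)), F A) := measure_mono hsub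
      _ ≤ ∑ A ∈ (Finset.univ : Finset (Finset S)), μ (F A) := measure_biUnion_finset_le _ _
      _ ≤ ∑ A ∈ (Finset.univ : Finset (Finset S)),
            ENNReal.ofReal (Real.exp (-2 * T * (ε/2) ^ 2)) := by
          refine Finset.sum_le_sum fun A _ => ?_
          exact indicator_chernoff μ P hP0 hP1 T X hmeas hindep hlaw A (ε/2) (by linarith)
      _ = ((2:ℕ) ^ (Fintype.card S) : ℕ) * ENNReal.ofReal (Real.exp (-2 * T * (ε/2) ^ 2)) := by
          rw [Finset.sum_const, Finset.card_univ, Fintype.card_finset, nsmul_eq_mul]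
      _ = ENNReal.ofReal ((2:ℝ) ^ (Fintype.card S) * Real.exp (-2 * T * (ε/2) ^ 2)) := by
          rw [ENNReal.ofReal_mul (by positivity)]
          congr 1
          rw [← ENNReal.ofReal_natCast]
          norm_num
      _ ≤ ENNReal.ofReal δ := ENNReal.ofReal_le_ofReal hkey
  -- conclude
  have hμE : ENNReal.ofReal (1 - δ) ≤ μ E := by
    have hc := measure_compl hEmeas (measure_ne_top μ E)
    rw [measure_univ] at hc
    have h1 : ENNReal.ofReal (1 - δ) = 1 - ENNReal.ofReal δ := by
      rw [ENNReal.ofReal_sub _ hδ0.le, ENNReal.ofReal_one]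
    rw [h1]
    calc (1:ENNReal) - ENNReal.ofReal δ ≤ 1 - μ Eᶜ := tsub_le_tsub_left hcompl 1
      _ = 1 - (1 - μ E) := by rw [hc]
      _ = μ E := ENNReal.sub_sub_cancel ENNReal.one_ne_top prob_le_one
  exact hμE
end

section
/- Let S be a nonempty finite set with cardinality |S|, let P be a probability mass function on S, and let X_1,...,X_T (T ≥ 1) be i.i.d. S-valued random variables with law P. Then the expected L1 deviation of the empirical distribution satisfies E[ ‖P̂ − P‖₁ ] ≤ √( |S| / T ). -/
open MeasureTheory ProbabilityTheory Finset

lemma aux_integrable_of_bound {Ω : Type*} [MeasurableSpace Ω] (μ : Measure Ω)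
    [IsProbabilityMeasure μ] {w : Ω → ℝ} (hm : Measurable w) (C : ℝ)
    (hb : ∀ ω, |w ω| ≤ C) : Integrable w μ :=
  (integrable_const C).mono' hm.aestronglyMeasurable (Filter.Eventually.of_forall hb)

lemma aux_abs_integral_le_sqrt {Ω : Type*} [MeasurableSpace Ω] (μ : Measure Ω)
    [IsProbabilityMeasure μ] {h : Ω → ℝ} (h1 : Integrable h μ)
    (h2 : Integrable (fun ω => h ω ^ 2) μ) :
    ∫ ω, |h ω| ∂μ ≤ Real.sqrt (∫ ω, h ω ^ 2 ∂μ) := by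
  set I := ∫ ω, h ω ^ 2 ∂μ with hIdef
  have hI : 0 ≤ I := integral_nonneg fun ω => sq_nonneg _
  have hsI : 0 ≤ Real.sqrt I := Real.sqrt_nonneg _
  apply le_of_forall_pos_le_add
  intro ε hε
  set b : ℝ := Real.sqrt I + ε with hbdef
  have hb : 0 < b := by positivity
  have hpt : ∀ ω, |h ω| ≤ (h ω ^ 2 + b ^ 2) / (2 * b) := by
    intro ω
    rw [le_div_iff₀ (by positivity)]
    nlinarith [sq_nonneg (|h ω| - b), sq_abs (h ω)]
  have hle : ∫ ω, |h ω| ∂μ ≤ ∫ ω, (h ω ^ 2 + b ^ 2) / (2 * b) ∂μ := by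
    apply integral_mono h1.abs (((h2.add (integrable_const _)).div_const _)) hpt
  have hval : ∫ ω, (h ω ^ 2 + b ^ 2) / (2 * b) ∂μ = (I + b ^ 2) / (2 * b) := by
    rw [integral_div, integral_add h2 (integrable_const _), integral_const]
    simp [hIdef]
  have hIb : I ≤ b ^ 2 := by
    nlinarith [Real.sq_sqrt hI, Real.sqrt_nonneg I]
  calc ∫ ω, |h ω| ∂μ ≤ (I + b ^ 2) / (2 * b) := hval ▸ hle
    _ ≤ b := by rw [div_le_iff₀ (by positivity)]; nlinarith
    _ = Real.sqrt I + ε := rfl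

/-- **Expected L1 deviation of the empirical distribution.** Let `S` be a nonempty finite
set, `P` a probability mass function on `S`, and `X 0, …, X (T-1)` i.i.d. `S`-valued
random variables with law `P` (`T ≥ 1`). Then `E[‖P̂ - P‖₁] ≤ √(|S| / T)`. -/
theorem empirical_distribution_expected_l1
    {S : Type*} [Fintype S] [Nonempty S] [DecidableEq S] [MeasurableSpace S]
    [MeasurableSingletonClass S]
    (P : S → ℝ) (hP0 : ∀ s, 0 ≤ P s) (hP1 : ∑ s, P s = 1)
    {Ω : Type*} [MeasurableSpace Ω] (μ : Measure Ω) [IsProbabilityMeasure μ]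
    (T : ℕ) (hT : 1 ≤ T)
    (X : Fin T → Ω → S) (hmeas : ∀ t, Measurable (X t))
    (hindep : iIndepFun X μ)
    (hlaw : ∀ t s, μ (X t ⁻¹' {s}) = ENNReal.ofReal (P s)) :
    ∫ ω, (∑ s, |((Finset.univ.filter fun t => X t ω = s).card : ℝ) / T - P s|) ∂μ ≤
      Real.sqrt ((Fintype.card S : ℝ) / T) := by
  have hT0 : (0:ℝ) < T := by exact_mod_cast hT
  have hP1' : ∀ s, P s ≤ 1 := by
    intro s
    rw [← hP1]
    exact single_le_sum (fun i _ => hP0 i) (mem_univ s)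
  set f : S → Fin T → Ω → ℝ := fun s t ω => if X t ω = s then 1 else 0 with hf
  have hfmeas : ∀ s t, Measurable (f s t) := fun s t =>
    (measurable_of_countable (fun x : S => if x = s then (1:ℝ) else 0)).comp (hmeas t)
  have hfbd : ∀ s t ω, 0 ≤ f s t ω ∧ f s t ω ≤ 1 := by
    intro s t ω; simp only [hf]; split <;> norm_num
  -- f as indicator
  have hfind : ∀ s t, f s t = Set.indicator (X t ⁻¹' {s}) (fun _ => (1:ℝ)) := by
    intro s t; funext ω
    by_cases h : X t ω = s <;> simp [hf, Set.indicator_apply, h]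
  have hint_f : ∀ s t, ∫ ω, f s t ω ∂μ = P s := by
    intro s t
    rw [hfind, integral_indicator_const (1:ℝ) ((hmeas t) (measurableSet_singleton s)),
      measureReal_def, hlaw, smul_eq_mul, mul_one, ENNReal.toReal_ofReal (hP0 s)]
  have hint_ff : ∀ s (t t' : Fin T), t ≠ t' →
      ∫ ω, f s t ω * f s t' ω ∂μ = P s * P s := by
    intro s t t' hne
    have hprod : (fun ω => f s t ω * f s t' ω)
        = Set.indicator ((X t ⁻¹' {s}) ∩ (X t' ⁻¹' {s})) (fun _ => (1:ℝ)) := by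
      funext ω
      simp only [hf, Set.indicator_apply, Set.mem_inter_iff, Set.mem_preimage,
        Set.mem_singleton_iff]
      by_cases h1 : X t ω = s <;> by_cases h2 : X t' ω = s <;> simp [h1, h2]
    rw [hprod, integral_indicator_const (1:ℝ)
        (((hmeas t) (measurableSet_singleton s)).inter ((hmeas t') (measurableSet_singleton s))),
      measureReal_def, (hindep.indepFun hne).measure_inter_preimage_eq_mul _ _
        (measurableSet_singleton s) (measurableSet_singleton s),
      hlaw, hlaw, ← ENNReal.ofReal_mul (hP0 s), smul_eq_mul, mul_one,
      ENNReal.toReal_ofReal (mul_nonneg (hP0 s) (hP0 s))]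
  set g : S → Fin T → Ω → ℝ := fun s t ω => f s t ω - P s with hg
  have hgmeas : ∀ s t, Measurable (g s t) := fun s t => (hfmeas s t).sub measurable_const
  have hgbd : ∀ s t ω, |g s t ω| ≤ 1 := by
    intro s t ω
    have := hfbd s t ω
    have := hP0 s; have := hP1' s
    rw [abs_le]; constructor <;> simp only [hg] <;> nlinarith
  have hgg_int : ∀ s (t t' : Fin T), Integrable (fun ω => g s t ω * g s t' ω) μ := by
    intro s t t'
    apply aux_integrable_of_bound μ ((hgmeas s t).mul (hgmeas s t')) 1
    intro ω
    rw [Pi.mul_apply, abs_mul]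
    exact mul_le_one₀ (hgbd s t ω) (abs_nonneg _) (hgbd s t' ω)
  have hint_gg : ∀ s (t t' : Fin T),
      ∫ ω, g s t ω * g s t' ω ∂μ = if t = t' then P s - P s * P s else 0 := by
    intro s t t'
    have hexp : ∀ ω, g s t ω * g s t' ω
        = f s t ω * f s t' ω - P s * f s t ω - P s * f s t' ω + P s * P s := by
      intro ω; simp only [hg]; ring
    have hff_int : Integrable (fun ω => f s t ω * f s t' ω) μ := by
      apply aux_integrable_of_bound μ ((hfmeas s t).mul (hfmeas s t')) 1
      intro ω
      rw [Pi.mul_apply, abs_mul]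
      have h1 := hfbd s t ω; have h2 := hfbd s t' ω
      rw [abs_of_nonneg h1.1, abs_of_nonneg h2.1]
      exact mul_le_one₀ h1.2 h2.1 h2.2
    have hf_int : ∀ t, Integrable (f s t) μ := by
      intro t
      apply aux_integrable_of_bound μ (hfmeas s t) 1
      intro ω
      rw [abs_of_nonneg (hfbd s t ω).1]; exact (hfbd s t ω).2
    have i1 : Integrable (fun ω => P s * f s t ω) μ := (hf_int t).const_mul _
    have i2 : Integrable (fun ω => P s * f s t' ω) μ := (hf_int t').const_mul _
    have i3 : Integrable (fun ω => f s t ω * f s t' ω - P s * f s t ω) μ := hff_int.sub i1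
    have i4 : Integrable
        (fun ω => f s t ω * f s t' ω - P s * f s t ω - P s * f s t' ω) μ := i3.sub i2
    have : ∫ ω, g s t ω * g s t' ω ∂μ
        = (∫ ω, f s t ω * f s t' ω ∂μ) - P s * P s - P s * P s + P s * P s := by
      simp only [hexp]
      rw [integral_add i4 (integrable_const _), integral_sub i3 i2, integral_sub hff_int i1,
        integral_const_mul, integral_const_mul, hint_f, hint_f, integral_const]
      simp
    by_cases hne : t = t'
    · subst hne
      have hsq : ∀ ω, f s t ω * f s t ω = f s t ω := by
        intro ω; simp only [hf]; split <;> norm_num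
      simp only [hsq] at this
      rw [hint_f] at this
      simp [this]
    · rw [hint_ff s t t' hne] at this
      rw [if_neg hne, this]
      ring
  -- variance bound
  have hvar : ∀ s, ∫ ω, (∑ t, g s t ω) ^ 2 ∂μ ≤ P s * T := by
    intro s
    have hexp : ∀ ω, (∑ t, g s t ω) ^ 2 = ∑ t, ∑ t', g s t ω * g s t' ω := by
      intro ω; rw [sq, Finset.sum_mul_sum]
    calc ∫ ω, (∑ t, g s t ω) ^ 2 ∂μ
        = ∑ t, ∑ t', ∫ ω, g s t ω * g s t' ω ∂μ := by
          simp only [hexp]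
          rw [integral_finset_sum _ (fun t _ => integrable_finset_sum _ (fun t' _ => hgg_int s t t'))]
          exact Finset.sum_congr rfl fun t _ =>
            integral_finset_sum _ (fun t' _ => hgg_int s t t')
      _ = ∑ t : Fin T, (P s - P s * P s) := by
          refine Finset.sum_congr rfl fun t _ => ?_
          rw [Finset.sum_congr rfl fun t' _ => hint_gg s t t']
          simp
      _ = T * (P s - P s * P s) := by rw [Finset.sum_const]; simp [mul_comm]
      _ ≤ P s * T := by nlinarith [hP0 s, sq_nonneg (P s)]
  -- per-s bound on expected deviation
  have hper : ∀ s, ∫ ω, |((Finset.univ.filter fun t => X t ω = s).card : ℝ) / T - P s| ∂μ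
      ≤ Real.sqrt (P s / T) := by
    intro s
    have hcard : ∀ ω, ((Finset.univ.filter fun t => X t ω = s).card : ℝ) = ∑ t, f s t ω := by
      intro ω
      rw [Finset.card_filter]
      push_cast
      simp [hf]
    have hrw : ∀ ω, ((Finset.univ.filter fun t => X t ω = s).card : ℝ) / T - P s
        = (∑ t, g s t ω) / T := by
      intro ω
      rw [hcard]
      simp only [hg, Finset.sum_sub_distrib, Finset.sum_const, Finset.card_univ,
        Fintype.card_fin, nsmul_eq_mul]
      field_simp
    have hsum_meas : Measurable (fun ω => ∑ t, g s t ω) :=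
      Finset.measurable_sum _ fun t _ => hgmeas s t
    have hsum_bd : ∀ ω, |∑ t, g s t ω| ≤ T := by
      intro ω
      calc |∑ t, g s t ω| ≤ ∑ t, |g s t ω| := Finset.abs_sum_le_sum_abs _ _
        _ ≤ ∑ _t : Fin T, (1:ℝ) := Finset.sum_le_sum fun t _ => hgbd s t ω
        _ = T := by simp
    have h1 : Integrable (fun ω => ∑ t, g s t ω) μ :=
      aux_integrable_of_bound μ hsum_meas T hsum_bd
    have h2 : Integrable (fun ω => (∑ t, g s t ω) ^ 2) μ := by
      apply aux_integrable_of_bound μ (hsum_meas.pow_const 2) ((T:ℝ)^2)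
      intro ω
      rw [abs_pow]
      exact pow_le_pow_left₀ (abs_nonneg _) (hsum_bd ω) 2
    calc ∫ ω, |((Finset.univ.filter fun t => X t ω = s).card : ℝ) / T - P s| ∂μ
        = ∫ ω, |∑ t, g s t ω| / T ∂μ := by
          refine integral_congr_ae (Filter.Eventually.of_forall fun ω => ?_)
          dsimp only
          rw [hrw, abs_div, abs_of_pos hT0]
      _ = (∫ ω, |∑ t, g s t ω| ∂μ) / T := integral_div _ _
      _ ≤ Real.sqrt (∫ ω, (∑ t, g s t ω) ^ 2 ∂μ) / T := by
          gcongr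
          exact aux_abs_integral_le_sqrt μ h1 h2
      _ ≤ Real.sqrt (P s * T) / T := by
          gcongr
          exact hvar s
      _ = Real.sqrt (P s / T) := by
          rw [show P s / (T:ℝ) = (P s * T) / (T:ℝ)^2 by field_simp,
            Real.sqrt_div (mul_nonneg (hP0 s) hT0.le), Real.sqrt_sq hT0.le]
  -- combine
  have hmeas_dev : ∀ s, Measurable
      (fun ω => |((Finset.univ.filter fun t => X t ω = s).card : ℝ) / T - P s|) := by
    intro s
    have : Measurable (fun ω => ((Finset.univ.filter fun t => X t ω = s).card : ℝ)) := by
      have : (fun ω => ((Finset.univ.filter fun t => X t ω = s).card : ℝ))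
          = fun ω => ∑ t, f s t ω := by
        funext ω
        rw [Finset.card_filter]; push_cast; simp [hf]
      rw [this]
      exact Finset.measurable_sum _ fun t _ => hfmeas s t
    exact ((this.div_const _).sub measurable_const).abs
  have hint_dev : ∀ s, Integrable
      (fun ω => |((Finset.univ.filter fun t => X t ω = s).card : ℝ) / T - P s|) μ := by
    intro s
    apply aux_integrable_of_bound μ (hmeas_dev s) 2
    intro ω
    rw [abs_abs]
    have hc : (0:ℝ) ≤ ((Finset.univ.filter fun t => X t ω = s).card : ℝ) / T := by positivity
    have hc2 : ((Finset.univ.filter fun t => X t ω = s).card : ℝ) / T ≤ 1 := by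
      rw [div_le_one hT0]
      have := Finset.card_filter_le (univ : Finset (Fin T)) (fun t => X t ω = s)
      simp only [Finset.card_univ, Fintype.card_fin] at this
      exact_mod_cast this
    have := hP0 s; have := hP1' s
    rw [abs_le]; constructor <;> nlinarith
  calc ∫ ω, (∑ s, |((Finset.univ.filter fun t => X t ω = s).card : ℝ) / T - P s|) ∂μ
      = ∑ s, ∫ ω, |((Finset.univ.filter fun t => X t ω = s).card : ℝ) / T - P s| ∂μ :=
        integral_finset_sum _ fun s _ => hint_dev s
    _ ≤ ∑ s, Real.sqrt (P s / T) := Finset.sum_le_sum fun s _ => hper s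
    _ = (∑ s, Real.sqrt (P s)) / Real.sqrt T := by
        rw [Finset.sum_div]
        exact Finset.sum_congr rfl fun s _ => Real.sqrt_div (hP0 s) _
    _ ≤ Real.sqrt (Fintype.card S) / Real.sqrt T := by
        gcongr
        have hcs := Finset.sum_mul_sq_le_sq_mul_sq Finset.univ (fun _ => (1:ℝ))
          (fun s => Real.sqrt (P s))
        simp only [one_mul, one_pow, Finset.sum_const, Finset.card_univ, nsmul_eq_mul, mul_one]
          at hcs
        have hsq : ∀ s, Real.sqrt (P s) ^ 2 = P s := fun s => Real.sq_sqrt (hP0 s)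
        rw [Finset.sum_congr rfl fun s _ => hsq s, hP1, mul_one] at hcs
        have h0 : 0 ≤ ∑ s, Real.sqrt (P s) :=
          Finset.sum_nonneg fun s _ => Real.sqrt_nonneg _
        nlinarith [Real.sq_sqrt (show (0:ℝ) ≤ Fintype.card S by positivity),
          Real.sqrt_nonneg ((Fintype.card S : ℝ))]
    _ = Real.sqrt ((Fintype.card S : ℝ) / T) := (Real.sqrt_div (by positivity) _).symm
end

section
/- Let S be a finite set with cardinality n, and let c : S → ℝ take values in {0,1} with m = #{s ∈ S : c(s) = 1} satisfying 1 ≤ m ≤ n. If c' is obtained from c by incrementing by 1 some state s₀ with c(s₀) = 1 (a revisited state), then J(c') = (m+1)² / ( n·(m+3) ); this is strictly less than (m+1)/n, and if moreover m ≥ 2 then J(c') < m/n = J(c), i.e., revisiting an already-visited state strictly decreases Jain's fairness index. -/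
open Finset

/-- Jain's fairness index of a count vector `c` on a finite set `S`:
`J(c) = (∑ c)² / (|S| · ∑ c²)`. -/
noncomputable def jainIndex {S : Type*} [Fintype S] (c : S → ℝ) : ℝ :=
  (∑ s, c s) ^ 2 / ((Fintype.card S : ℝ) * ∑ s, (c s) ^ 2)

/-- **Revisiting an already-visited state decreases Jain's fairness index.** Let `S` be
a finite set of cardinality `n` and let `c : S → ℝ` take values in `{0, 1}` with
`m = #{s : c s = 1}` satisfying `1 ≤ m ≤ n`. If `c'` is obtained from `c` by
incrementing by `1` some state `s₀` with `c s₀ = 1`, then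
`J(c') = (m+1)² / (n·(m+3))`; this is strictly less than `(m+1)/n`, and if moreover
`m ≥ 2` then `J(c') < m/n = J(c)`. -/
theorem jainIndex_revisit_decreases
    {S : Type*} [Fintype S] [DecidableEq S]
    (c : S → ℝ) (hc01 : ∀ s, c s = 0 ∨ c s = 1)
    (m : ℕ) (hm : m = (Finset.univ.filter fun s => c s = 1).card)
    (hm1 : 1 ≤ m) (hmn : m ≤ Fintype.card S)
    (s₀ : S) (hs₀ : c s₀ = 1)
    (c' : S → ℝ) (hc' : c' = Function.update c s₀ (c s₀ + 1)) :
    jainIndex c' = ((m : ℝ) + 1) ^ 2 / ((Fintype.card S : ℝ) * ((m : ℝ) + 3)) ∧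
    jainIndex c' < ((m : ℝ) + 1) / (Fintype.card S : ℝ) ∧
    (2 ≤ m → jainIndex c' < (m : ℝ) / (Fintype.card S : ℝ) ∧
      (m : ℝ) / (Fintype.card S : ℝ) = jainIndex c) := by
  set n := Fintype.card S with hn
  have hnpos : (0:ℝ) < n := by
    have : 0 < n := lt_of_lt_of_le hm1 hmn
    exact_mod_cast this
  have hmpos : (0:ℝ) < m := by exact_mod_cast hm1
  -- sums of c
  have hsum : ∑ s, c s = (m : ℝ) := by
    rw [hm]
    rw [← Finset.sum_filter_ne_zero Finset.univ (f := c)]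
    have hset : (Finset.univ.filter fun s => c s ≠ 0) =
        (Finset.univ.filter fun s => c s = 1) := by
      ext s
      simp only [Finset.mem_filter, Finset.mem_univ, true_and]
      rcases hc01 s with h | h <;> simp [h]
    rw [hset, Finset.sum_congr rfl (fun s hs => (Finset.mem_filter.mp hs).2)]
    simp
  have hsq : ∀ s, (c s) ^ 2 = c s := by
    intro s; rcases hc01 s with h | h <;> simp [h]
  have hsumsq : ∑ s, (c s) ^ 2 = (m : ℝ) := by
    rw [Finset.sum_congr rfl (fun s _ => hsq s), hsum]
  -- sums of c'
  have hmem : s₀ ∈ Finset.univ := Finset.mem_univ s₀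
  have hsum' : ∑ s, c' s = (m : ℝ) + 1 := by
    rw [hc', Finset.sum_update_of_mem hmem, Finset.sdiff_singleton_eq_erase]
    rw [← Finset.add_sum_erase Finset.univ c hmem] at hsum
    linarith [hsum]
  have hsumsq' : ∑ s, (c' s) ^ 2 = (m : ℝ) + 3 := by
    have : ∑ s, (c' s) ^ 2 =
        ∑ s, (Function.update (fun s => (c s)^2) s₀ ((c s₀ + 1)^2)) s := by
      apply Finset.sum_congr rfl
      intro s _
      by_cases h : s = s₀ <;> simp [hc', h, Function.update]
    rw [this, Finset.sum_update_of_mem hmem, Finset.sdiff_singleton_eq_erase]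
    have h2 : ∑ s, (c s) ^ 2 = (c s₀)^2 + ∑ s ∈ Finset.univ.erase s₀, (c s)^2 :=
      (Finset.add_sum_erase Finset.univ _ hmem).symm
    rw [hsumsq] at h2
    rw [hs₀] at h2 ⊢
    have h3 : c s₀ ^ 2 = 1 := by rw [hs₀]; norm_num
    norm_num
    linarith
  have hJ' : jainIndex c' = ((m : ℝ) + 1) ^ 2 / ((n : ℝ) * ((m : ℝ) + 3)) := by
    rw [jainIndex, hsum', hsumsq']
  have key : ∀ x : ℝ, ((m:ℝ)+1)^2 < x * ((m:ℝ)+3) → 0 < x →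
      jainIndex c' < x / n := by
    intro x hx hxpos
    rw [hJ', div_lt_div_iff₀ (by positivity) hnpos]
    nlinarith
  refine ⟨hJ', key _ (by nlinarith) (by positivity), fun h2 => ?_⟩
  have hm2 : (2:ℝ) ≤ (m:ℝ) := by exact_mod_cast h2
  refine ⟨key _ (by nlinarith) (by positivity), ?_⟩
  rw [jainIndex, hsum, hsumsq]
  rw [div_eq_div_iff hnpos.ne' (by positivity)]
  ring
end
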